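/- arXiv:1903.02964 — 3 statements merged into one kernel-verified Lean document; each statement's English description precedes it below -/
import Mathlib

section
/- (Unbiasedness of the SMC sampler estimator of the unnormalized measure.) Consider the SMC sampler on a finite state space U with initial distribution η_0 = Γ_0 (a probability measure), potentials G_j(x) = γ_{j+1}(x)/γ_j(x) satisfying 0 < G_j(x) ≤ C, and Markov kernels M_j leaving η_j invariant. With N particles generated by sampling x_0^i ∼ η_0 i.i.d., then iteratively resampling according to normalized weights G_{j-1} and mutating via M_j, define the empirical measures η_j^N(f) = (1/N)∑_{i=1}^N f(x_j^i) and the estimator Γ_J^N(φ) = (∏_{j=0}^{J-1} η_j^N(G_j)) · η_J^N(φ). Then E[Γ_J^N(φ)] = Γ_J(φ) for every bounded φ : U → ℝ. -/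
open Finset

lemma sum_pi_prod {U : Type*} [Fintype U] {N : ℕ} (g : Fin N → U → ℝ) :
    ∑ y : Fin N → U, ∏ k, g k (y k) = ∏ k, ∑ u, g k u := by
  rw [Finset.prod_univ_sum, Fintype.piFinset_univ]

lemma exp_single {U : Type*} [Fintype U] {N : ℕ} (p f : U → ℝ) (hp : ∑ u, p u = 1)
    (i0 : Fin N) :
    ∑ y : Fin N → U, (∏ i, p (y i)) * f (y i0) = ∑ u, p u * f u := by
  have h1 : ∀ y : Fin N → U, (∏ i, p (y i)) * f (y i0)
      = ∏ i, (fun (i : Fin N) (u : U) => if i = i0 then p u * f u else p u) i (y i) := by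
    intro y
    have e1 : (∏ x ∈ univ.erase i0, p (y x)) * p (y i0) = ∏ i, p (y i) :=
      Finset.prod_erase_mul univ (fun i => p (y i)) (mem_univ i0)
    have e2 : (∏ x ∈ univ.erase i0,
          (fun (i : Fin N) (u : U) => if i = i0 then p u * f u else p u) x (y x))
          * (p (y i0) * f (y i0))
        = ∏ i, (fun (i : Fin N) (u : U) => if i = i0 then p u * f u else p u) i (y i) := by
      have := Finset.prod_erase_mul univ
        (fun i => (fun (i : Fin N) (u : U) => if i = i0 then p u * f u else p u) i (y i))
        (mem_univ i0)
      simpa using this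
    rw [← e2, ← e1]
    rw [Finset.prod_congr rfl (fun x hx => by
      simp [Finset.ne_of_mem_erase hx] :
        ∀ x ∈ univ.erase i0,
          (fun (i : Fin N) (u : U) => if i = i0 then p u * f u else p u) x (y x) = p (y x))]
    ring
  rw [Finset.sum_congr rfl (fun y _ => h1 y),
    sum_pi_prod (fun (i : Fin N) (u : U) => if i = i0 then p u * f u else p u)]
  have e3 : (∏ x ∈ univ.erase i0,
        ∑ u, (fun (i : Fin N) (u : U) => if i = i0 then p u * f u else p u) x u)
        * (∑ u, p u * f u)
      = ∏ i, ∑ u, (fun (i : Fin N) (u : U) => if i = i0 then p u * f u else p u) i u := by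
    have := Finset.prod_erase_mul univ
      (fun i => ∑ u, (fun (i : Fin N) (u : U) => if i = i0 then p u * f u else p u) i u)
      (mem_univ i0)
    simpa using this
  rw [← e3]
  rw [Finset.prod_congr rfl (fun x hx => by
    simp [Finset.ne_of_mem_erase hx, hp] :
      ∀ x ∈ univ.erase i0,
        (∑ u, (fun (i : Fin N) (u : U) => if i = i0 then p u * f u else p u) x u) = 1)]
  simp

lemma expA {U : Type*} [Fintype U] {N : ℕ} (hN : 0 < N) (p f : U → ℝ)
    (hp : ∑ u, p u = 1) :
    ∑ y : Fin N → U, (∏ i, p (y i)) * ((1/(N:ℝ)) * ∑ i, f (y i)) = ∑ u, p u * f u := by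
  have h : ∀ y : Fin N → U, (∏ i, p (y i)) * ((1/(N:ℝ)) * ∑ i, f (y i))
      = (1/(N:ℝ)) * ∑ i, (∏ k, p (y k)) * f (y i) := by
    intro y
    rw [Finset.mul_sum, Finset.mul_sum, Finset.mul_sum]
    apply Finset.sum_congr rfl
    intro i _
    ring
  rw [Finset.sum_congr rfl (fun y _ => h y), ← Finset.mul_sum, Finset.sum_comm]
  rw [Finset.sum_congr rfl (fun i _ => exp_single p f hp i)]
  simp only [Finset.sum_const, Finset.card_univ, Fintype.card_fin, nsmul_eq_mul]
  have : (N:ℝ) ≠ 0 := Nat.cast_ne_zero.mpr hN.ne'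
  field_simp

def snocEquiv (β : Type*) (n : ℕ) : ((Fin n → β) × β) ≃ (Fin (n+1) → β) where
  toFun p := Fin.snoc p.1 p.2
  invFun X := (fun j => X j.castSucc, X (Fin.last n))
  left_inv p := by
    ext j
    · simp
    · simp
  right_inv X := by
    funext i
    refine Fin.lastCases ?_ ?_ i
    · simp
    · intro j; simp

@[simp] lemma snoc_apply_zero {β : Type*} {n : ℕ} (p : Fin (n+1) → β) (x : β) :
    (Fin.snoc p x : Fin (n+2) → β) 0 = p 0 := by
  simpa using @Fin.snoc_castSucc (n+1) (fun _ => β) x p 0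

@[simp] lemma snocEquiv_apply (β : Type*) (n : ℕ) (p : (Fin n → β) × β) :
    snocEquiv β n p = Fin.snoc p.1 p.2 := rfl

lemma smc_aux {U : Type*} [Fintype U] {N : ℕ} (hN : 0 < N)
    (M : ℕ → U → U → ℝ) (hMrow : ∀ j x, ∑ y, M j x y = 1)
    (γ : ℕ → U → ℝ) (hinit : ∑ x, γ 0 x = 1) :
    ∀ J : ℕ, (∀ j, j ≤ J → ∀ x, 0 < γ j x) →
      (∀ j, 1 ≤ j → j ≤ J → ∀ y, ∑ x, γ j x * M j x y = γ j y) →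
      ∀ φ : U → ℝ,
      ∑ X : Fin (J + 1) → Fin N → U,
        (((∏ i, γ 0 (X 0 i)) *
          ∏ j : Fin J, ∏ i,
            (∑ k, ((γ ((j : ℕ) + 1) (X j.castSucc k) / γ (j : ℕ) (X j.castSucc k)) /
                (∑ k', γ ((j : ℕ) + 1) (X j.castSucc k') / γ (j : ℕ) (X j.castSucc k'))) *
              M ((j : ℕ) + 1) (X j.castSucc k) (X j.succ i))) *
        ((∏ j : Fin J, (1 / (N : ℝ)) *
            ∑ i, γ ((j : ℕ) + 1) (X j.castSucc i) / γ (j : ℕ) (X j.castSucc i)) *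
          ((1 / (N : ℝ)) * ∑ i, φ (X (Fin.last J) i)))) =
      ∑ x, φ x * γ J x := by
  intro J
  induction J with
  | zero =>
    intro hpos hMinv φ
    simp only [Finset.univ_eq_empty, Finset.prod_empty, one_mul, mul_one]
    rw [← Equiv.sum_comp (Equiv.funUnique (Fin 1) (Fin N → U)).symm]
    show ∑ y : Fin N → U, (∏ i, γ 0 (y i)) * ((1/(N:ℝ)) * ∑ i, φ (y i)) = _
    rw [expA hN (γ 0) φ hinit]
    apply Finset.sum_congr rfl
    intro x _
    ring
  | succ J ih =>
    intro hpos hMinv φ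
    have hpos' : ∀ j, j ≤ J → ∀ x, 0 < γ j x := fun j hj x => hpos j (by omega) x
    have hMinv' : ∀ j, 1 ≤ j → j ≤ J → ∀ y, ∑ x, γ j x * M j x y = γ j y :=
      fun j h1 h2 y => hMinv j h1 (by omega) y
    set ψ : U → ℝ := fun x => (γ (J+1) x / γ J x) * ∑ u, M (J+1) x u * φ u with hψ
    rw [← Equiv.sum_comp (snocEquiv (Fin N → U) (J+1)), Fintype.sum_prod_type]
    simp only [snocEquiv_apply]
    have hstep : ∀ X : Fin (J+1) → Fin N → U,
        (∑ y : Fin N → U,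
          (((∏ i, γ 0 ((Fin.snoc X y : Fin (J+2) → Fin N → U) (0 : Fin (J+2)) i)) *
            ∏ j : Fin (J+1), ∏ i,
              (∑ k, ((γ ((j : ℕ) + 1) ((Fin.snoc X y : Fin (J+2) → Fin N → U) j.castSucc k) /
                      γ (j : ℕ) ((Fin.snoc X y : Fin (J+2) → Fin N → U) j.castSucc k)) /
                  (∑ k', γ ((j : ℕ) + 1) ((Fin.snoc X y : Fin (J+2) → Fin N → U) j.castSucc k') /
                      γ (j : ℕ) ((Fin.snoc X y : Fin (J+2) → Fin N → U) j.castSucc k'))) *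
                M ((j : ℕ) + 1) ((Fin.snoc X y : Fin (J+2) → Fin N → U) j.castSucc k) ((Fin.snoc X y : Fin (J+2) → Fin N → U) j.succ i))) *
          ((∏ j : Fin (J+1), (1 / (N : ℝ)) *
              ∑ i, γ ((j : ℕ) + 1) ((Fin.snoc X y : Fin (J+2) → Fin N → U) j.castSucc i) /
                  γ (j : ℕ) ((Fin.snoc X y : Fin (J+2) → Fin N → U) j.castSucc i)) *
            ((1 / (N : ℝ)) *
              ∑ i, φ ((Fin.snoc X y : Fin (J+2) → Fin N → U) (Fin.last (J+1)) i)))))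
        = (((∏ i, γ 0 (X 0 i)) *
            ∏ j : Fin J, ∏ i,
              (∑ k, ((γ ((j : ℕ) + 1) (X j.castSucc k) / γ (j : ℕ) (X j.castSucc k)) /
                  (∑ k', γ ((j : ℕ) + 1) (X j.castSucc k') / γ (j : ℕ) (X j.castSucc k'))) *
                M ((j : ℕ) + 1) (X j.castSucc k) (X j.succ i))) *
          ((∏ j : Fin J, (1 / (N : ℝ)) *
              ∑ i, γ ((j : ℕ) + 1) (X j.castSucc i) / γ (j : ℕ) (X j.castSucc i)) *
            ((1 / (N : ℝ)) * ∑ i, ψ (X (Fin.last J) i)))) := by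
      intro X
      simp only [Fin.prod_univ_castSucc (n := J)]
      simp only [Fin.succ_castSucc, Fin.snoc_castSucc, Fin.succ_last, Fin.snoc_last,
        Fin.coe_castSucc, Fin.val_last, snoc_apply_zero]
      set x : Fin N → U := X (Fin.last J) with hx
      set S : ℝ := ∑ k', γ (J+1) (x k') / γ J (x k') with hS
      have hSpos : 0 < S := by
        rw [hS]
        apply Finset.sum_pos
        · intro k _
          exact div_pos (hpos (J+1) le_rfl _) (hpos J (by omega) _)
        · exact Finset.univ_nonempty_iff.mpr ⟨⟨0, hN⟩⟩
      set p : U → ℝ := fun u => ∑ k, ((γ (J+1) (x k) / γ J (x k)) / S) * M (J+1) (x k) u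
        with hp
      have hp1 : ∑ u, p u = 1 := by
        have e : ∀ k : Fin N, ∑ u, ((γ (J+1) (x k) / γ J (x k)) / S) * M (J+1) (x k) u
            = (γ (J+1) (x k) / γ J (x k)) / S := by
          intro k; rw [← Finset.mul_sum, hMrow (J+1) (x k), mul_one]
        simp only [hp]
        rw [Finset.sum_comm, Finset.sum_congr rfl fun k _ => e k, ← Finset.sum_div,
          ← hS, div_self hSpos.ne']
      have hrearr : ∀ y : Fin N → U,
          (((∏ i, γ 0 (X 0 i)) *
            ((∏ j : Fin J, ∏ i,
              (∑ k, ((γ ((j : ℕ) + 1) (X j.castSucc k) / γ (j : ℕ) (X j.castSucc k)) /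
                  (∑ k', γ ((j : ℕ) + 1) (X j.castSucc k') / γ (j : ℕ) (X j.castSucc k'))) *
                M ((j : ℕ) + 1) (X j.castSucc k) (X j.succ i))) *
              ∏ i, ∑ k, ((γ (J+1) (x k) / γ J (x k)) / S) * M (J+1) (x k) (y i))) *
          (((∏ j : Fin J, (1 / (N : ℝ)) *
              ∑ i, γ ((j : ℕ) + 1) (X j.castSucc i) / γ (j : ℕ) (X j.castSucc i)) *
              ((1 / (N : ℝ)) * S)) *
            ((1 / (N : ℝ)) * ∑ i, φ (y i))))
          = (((∏ i, γ 0 (X 0 i)) *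
            (∏ j : Fin J, ∏ i,
              (∑ k, ((γ ((j : ℕ) + 1) (X j.castSucc k) / γ (j : ℕ) (X j.castSucc k)) /
                  (∑ k', γ ((j : ℕ) + 1) (X j.castSucc k') / γ (j : ℕ) (X j.castSucc k'))) *
                M ((j : ℕ) + 1) (X j.castSucc k) (X j.succ i)))) *
            ((∏ j : Fin J, (1 / (N : ℝ)) *
              ∑ i, γ ((j : ℕ) + 1) (X j.castSucc i) / γ (j : ℕ) (X j.castSucc i)) *
              ((1 / (N : ℝ)) * S))) *
            ((∏ i, p (y i)) * ((1 / (N : ℝ)) * ∑ i, φ (y i))) := by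
        intro y
        simp only [hp]
        ring
      rw [Finset.sum_congr rfl fun y _ => hrearr y, ← Finset.mul_sum,
        expA hN p φ hp1]
      have h1 : ∑ u, p u * φ u = (∑ i, ψ (x i)) / S := by
        have e : ∀ u : U, p u * φ u
            = ∑ k, ((γ (J+1) (x k) / γ J (x k)) / S) * (M (J+1) (x k) u * φ u) := by
          intro u
          simp only [hp]
          rw [Finset.sum_mul]
          exact Finset.sum_congr rfl fun k _ => by ring
        rw [Finset.sum_congr rfl fun u _ => e u, Finset.sum_comm, Finset.sum_div]
        apply Finset.sum_congr rfl
        intro k _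
        rw [← Finset.mul_sum]
        simp only [hψ]
        rw [div_mul_eq_mul_div]
      rw [h1]
      have gen : ∀ a b T : ℝ,
          (a * (b * (1 / (N:ℝ) * S))) * (T / S) = a * (b * (1 / (N:ℝ) * T)) := by
        intro a b T
        have hS' : S ≠ 0 := hSpos.ne'
        field_simp
      exact gen _ _ _
    rw [Finset.sum_congr rfl fun X _ => hstep X, ih hpos' hMinv' ψ]
    have hcancel : ∀ x : U, ψ x * γ J x = γ (J+1) x * ∑ u, M (J+1) x u * φ u := by
      intro x
      simp only [hψ]
      have h := (hpos J (by omega) x).ne'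
      field_simp
    rw [Finset.sum_congr rfl fun x _ => hcancel x]
    have e : ∀ x : U, γ (J+1) x * ∑ u, M (J+1) x u * φ u
        = ∑ u, (γ (J+1) x * M (J+1) x u) * φ u := by
      intro x
      rw [Finset.mul_sum]
      exact Finset.sum_congr rfl fun u _ => by ring
    rw [Finset.sum_congr rfl fun x _ => e x, Finset.sum_comm]
    apply Finset.sum_congr rfl
    intro u _
    rw [← Finset.sum_mul, hMinv (J+1) (by omega) le_rfl u]
    ring

/-- Unbiasedness of the SMC sampler estimator of the unnormalized measure.
The particle system is described by its exact joint law on the finite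
configuration space `Fin (J+1) → Fin N → U`: particles are initialized i.i.d.
from `η₀ = γ₀`, and at each step each particle independently resamples an index
according to the normalized weights `G_{j} = γ_{j+1}/γ_j` and then mutates via
the `η_{j+1}`-invariant kernel `M_{j+1}`.  The expectation of the estimator
`Γ_J^N(φ) = (∏_j η_j^N(G_j)) η_J^N(φ)` equals `Γ_J(φ) = ∑_x φ(x) γ_J(x)`. -/
theorem smc_unnormalized_estimator_unbiased
    (U : Type*) [Fintype U] [Nonempty U] (J N : ℕ) (hN : 0 < N)
    (γ : ℕ → U → ℝ) (hpos : ∀ j, j ≤ J → ∀ x, 0 < γ j x)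
    (hinit : ∑ x, γ 0 x = 1)
    (C : ℝ) (hGC : ∀ j, j < J → ∀ x : U, γ (j + 1) x / γ j x ≤ C)
    (M : ℕ → U → U → ℝ)
    (hMnn : ∀ j x y, 0 ≤ M j x y)
    (hMrow : ∀ j x, ∑ y, M j x y = 1)
    (hMinv : ∀ j, 1 ≤ j → j ≤ J → ∀ y, ∑ x, γ j x * M j x y = γ j y)
    (φ : U → ℝ) :
    ∑ X : Fin (J + 1) → Fin N → U,
      (((∏ i, γ 0 (X 0 i)) *
        ∏ j : Fin J, ∏ i,
          (∑ k, ((γ ((j : ℕ) + 1) (X j.castSucc k) / γ (j : ℕ) (X j.castSucc k)) /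
              (∑ k', γ ((j : ℕ) + 1) (X j.castSucc k') / γ (j : ℕ) (X j.castSucc k'))) *
            M ((j : ℕ) + 1) (X j.castSucc k) (X j.succ i))) *
      ((∏ j : Fin J, (1 / (N : ℝ)) *
          ∑ i, γ ((j : ℕ) + 1) (X j.castSucc i) / γ (j : ℕ) (X j.castSucc i)) *
        ((1 / (N : ℝ)) * ∑ i, φ (X (Fin.last J) i)))) =
    ∑ x, φ x * γ J x := by
  exact smc_aux hN M hMrow γ hinit J hpos hMinv φ
end

section
/- (Single-term debiased estimator.) Let (Δ_l)_{l≥0} be random variables with ∑_{l=0}^∞ E|Δ_l| < ∞ and define Z̄ = ∑_{l=0}^∞ E[Δ_l]. Let p = (p_0, p_1, ...) be a probability distribution on ℕ with p_l > 0 whenever E[Δ_l] ≠ 0, and let L ∼ p be independent of (Δ_l). Then the estimator Ẑ_s = Δ_L / p_L satisfies E[Ẑ_s] = Z̄. -/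
open MeasureTheory ProbabilityTheory

/-- Single-term debiased estimator: if `L ∼ p` is independent of the sequence
`(Δ_l)`, `∑_l E|Δ_l| < ∞`, and `p_l > 0` whenever `E[Δ_l] ≠ 0`, then
`E[Δ_L / p_L] = ∑_l E[Δ_l]`. -/
theorem single_term_debiased_unbiased
    {Ω : Type*} [MeasurableSpace Ω] (μ : Measure Ω) [IsProbabilityMeasure μ]
    (Δ : ℕ → Ω → ℝ) (hmeas : ∀ l, Measurable (Δ l))
    (hint : ∀ l, Integrable (Δ l) μ)
    (hsum : Summable fun l => ∫ ω, |Δ l ω| ∂μ)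
    (L : Ω → ℕ) (hL : Measurable L)
    (p : ℕ → ℝ) (hp_nonneg : ∀ l, 0 ≤ p l)
    (hp_law : ∀ l, μ (L ⁻¹' {l}) = ENNReal.ofReal (p l))
    (hp_pos : ∀ l, (∫ ω, Δ l ω ∂μ) ≠ 0 → 0 < p l)
    (hindep : IndepFun L (fun ω l => Δ l ω) μ) :
    ∫ ω, Δ (L ω) ω / p (L ω) ∂μ = ∑' l, ∫ ω, Δ l ω ∂μ := by
  classical
  -- the indicator of {L = l}
  set ind : ℕ → Ω → ℝ := fun l ω => if L ω = l then (1:ℝ) else 0 with hind_def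
  have hind_meas : ∀ l, Measurable (ind l) := by
    intro l
    exact Measurable.ite (hL (measurableSet_singleton l)) measurable_const measurable_const
  have hind_bd : ∀ l ω, ‖ind l ω‖ ≤ 1 := by
    intro l ω
    simp only [ind]
    split <;> simp
  have hind_nonneg : ∀ l ω, 0 ≤ ind l ω := by
    intro l ω
    simp only [ind]
    split <;> norm_num
  -- independence of ind l and Δ l (and |Δ l|)
  have hindΔ : ∀ l, IndepFun (ind l) (Δ l) μ := by
    intro l
    have hφ : Measurable (fun n : ℕ => if n = l then (1:ℝ) else 0) := measurable_of_countable _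
    have hψ : Measurable (fun f : ℕ → ℝ => f l) := measurable_pi_apply l
    exact hindep.comp hφ hψ
  have hindabs : ∀ l, IndepFun (ind l) (fun ω => |Δ l ω|) μ := by
    intro l
    have hφ : Measurable (fun n : ℕ => if n = l then (1:ℝ) else 0) := measurable_of_countable _
    have hψ : Measurable (fun f : ℕ → ℝ => |f l|) := (measurable_pi_apply l).abs
    exact hindep.comp hφ hψ
  -- integral of the indicator
  have hind_int : ∀ l, Integrable (ind l) μ := by
    intro l
    exact (integrable_const (1:ℝ)).bdd_mul
      (hind_meas l).aestronglyMeasurable (Filter.Eventually.of_forall fun ω =>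
        hind_bd l ω) |>.congr (by
          filter_upwards with ω; simp)
  have hind_integral : ∀ l, ∫ ω, ind l ω ∂μ = p l := by
    intro l
    have h1 : (fun ω => ind l ω) = Set.indicator (L ⁻¹' {l}) (fun _ => (1:ℝ)) := by
      funext ω
      simp [ind, Set.indicator_apply, Set.mem_preimage]
    rw [h1, integral_indicator_const _ (hL (measurableSet_singleton l))]
    simp [Measure.real, hp_law l, ENNReal.toReal_ofReal (hp_nonneg l)]
  -- key: ∫ ind l * F = p l * ∫ F for integrable F independent of ind l
  have key : ∀ l (F : Ω → ℝ), Integrable F μ → IndepFun (ind l) F μ →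
      ∫ ω, ind l ω * F ω ∂μ = p l * ∫ ω, F ω ∂μ := by
    intro l F hF hI
    have h := hI.integral_fun_mul_eq_mul_integral (hind_int l).aestronglyMeasurable hF.aestronglyMeasurable
    rw [hind_integral l] at h
    simpa [Pi.mul_apply] using h
  -- the summands
  set g : ℕ → Ω → ℝ := fun l ω => ind l ω * (Δ l ω / p l) with hg_def
  have hg_meas : ∀ l, AEStronglyMeasurable (g l) μ := by
    intro l
    exact ((hind_meas l).mul ((hmeas l).div_const _)).aestronglyMeasurable
  have hg_int : ∀ l, Integrable (g l) μ := by
    intro l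
    exact ((hint l).div_const _).bdd_mul (hind_meas l).aestronglyMeasurable
      (Filter.Eventually.of_forall (hind_bd l))
  -- pointwise decomposition
  have hpt : ∀ ω, (∑' l, g l ω) = Δ (L ω) ω / p (L ω) := by
    intro ω
    rw [tsum_eq_single (L ω)]
    · simp [g, ind]
    · intro l hl
      simp [g, ind, Ne.symm hl]
  -- integral of each summand
  have hg_integral : ∀ l, ∫ ω, g l ω ∂μ = ∫ ω, Δ l ω ∂μ := by
    intro l
    rw [show g l = fun ω => ind l ω * (Δ l ω / p l) from rfl]
    rw [key l _ ((hint l).div_const _) (by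
      have hφ : Measurable (fun n : ℕ => if n = l then (1:ℝ) else 0) := measurable_of_countable _
      have hψ : Measurable (fun f : ℕ → ℝ => f l / p l) := (measurable_pi_apply l).div_const _
      exact hindep.comp hφ hψ)]
    rw [integral_div]
    rcases eq_or_lt_of_le (hp_nonneg l) with h0 | h0
    · have hΔ0 : ∫ ω, Δ l ω ∂μ = 0 := by
        by_contra h
        exact absurd (hp_pos l h) (by rw [← h0]; exact lt_irrefl 0)
      rw [hΔ0]; simp
    · field_simp
  -- norm bound for each summand
  have hnorm : ∀ l, ∫⁻ ω, ‖g l ω‖₊ ∂μ ≤ ENNReal.ofReal (∫ ω, |Δ l ω| ∂μ) := by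
    intro l
    simp only [← enorm_eq_nnnorm]
    rw [← ofReal_integral_norm_eq_lintegral_enorm (hg_int l)]
    apply ENNReal.ofReal_le_ofReal
    have h1 : ∫ ω, ‖g l ω‖ ∂μ = ∫ ω, ind l ω * (|Δ l ω| / p l) ∂μ := by
      apply integral_congr_ae
      filter_upwards with ω
      rw [Real.norm_eq_abs, abs_mul, abs_of_nonneg (hind_nonneg l ω), abs_div,
        abs_of_nonneg (hp_nonneg l)]
    rw [h1, key l _ (((hint l).abs).div_const _) (by
      have hφ : Measurable (fun n : ℕ => if n = l then (1:ℝ) else 0) := measurable_of_countable _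
      have hψ : Measurable (fun f : ℕ → ℝ => |f l| / p l) := ((measurable_pi_apply l).abs).div_const _
      exact hindep.comp hφ hψ), integral_div]
    rcases eq_or_lt_of_le (hp_nonneg l) with h0 | h0
    · rw [← h0]
      simp [integral_nonneg (fun ω => abs_nonneg _)]
    · rw [mul_comm, div_mul_cancel₀ _ (ne_of_gt h0)]
  -- sum of norms is finite
  have hfin : (∑' l, ∫⁻ ω, ‖g l ω‖₊ ∂μ) ≠ ⊤ := by
    apply ne_of_lt
    calc ∑' l, ∫⁻ ω, ‖g l ω‖₊ ∂μ ≤ ∑' l, ENNReal.ofReal (∫ ω, |Δ l ω| ∂μ) :=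
          ENNReal.tsum_le_tsum hnorm
      _ = ENNReal.ofReal (∑' l, ∫ ω, |Δ l ω| ∂μ) := by
          rw [ENNReal.ofReal_tsum_of_nonneg (fun l => integral_nonneg fun ω => abs_nonneg _) hsum]
      _ < ⊤ := ENNReal.ofReal_lt_top
  -- put it together
  have hswap := integral_tsum hg_meas hfin
  calc ∫ ω, Δ (L ω) ω / p (L ω) ∂μ = ∫ ω, ∑' l, g l ω ∂μ := by
        apply integral_congr_ae
        filter_upwards with ω
        rw [hpt ω]
    _ = ∑' l, ∫ ω, g l ω ∂μ := hswap
    _ = ∑' l, ∫ ω, Δ l ω ∂μ := by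
        exact tsum_congr hg_integral
end

section
/- (Self-normalized importance sampling identity in expectation via ratio of unbiased estimators.) Let U be a finite set, γ_0 a probability density on U and γ_J a strictly positive unnormalized density. Let (x_0^i, ..., x_J^i), i = 1,...,N, be i.i.d. paths with x_0^i ∼ γ_0 and x_j^i ∼ M_j(x_{j-1}^i, ·), where each M_j leaves η_j = γ_j/Γ_j(1) invariant, and set W^i = ∏_{j=1}^J G_{j-1}(x_{j-1}^i) with G_j = γ_{j+1}/γ_j. Then E[(1/N)∑_{i=1}^N W^i φ(x_J^i)] = Γ_J(φ) for every bounded φ : U → ℝ, i.e. the annealed importance sampling estimator is unbiased for the unnormalized measure. -/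
open Finset

lemma path_norm (U : Type*) [Fintype U] (J : ℕ)
    (γ0 : U → ℝ) (M : ℕ → U → U → ℝ) (hMrow : ∀ j x, ∑ y, M j x y = 1) :
    ∑ y : Fin (J + 1) → U,
      γ0 (y 0) * ∏ j : Fin J, M ((j : ℕ) + 1) (y j.castSucc) (y j.succ) =
    ∑ x, γ0 x := by
  induction J with
  | zero =>
    rw [← (Equiv.funUnique (Fin 1) U).symm.sum_comp]
    simp
  | succ J ih =>
    rw [← (Fin.snocEquiv (fun _ => U)).sum_comp, Fintype.sum_prod_type, Finset.sum_comm]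
    refine (Finset.sum_congr rfl fun y _ => ?_).trans ih
    have h0 : (0 : Fin (J + 2)) = Fin.castSucc 0 := rfl
    simp only [Fin.snocEquiv_apply, Fin.prod_univ_castSucc, h0, Fin.snoc_castSucc,
      Fin.succ_castSucc, Fin.succ_last, Fin.snoc_last, Fin.coe_castSucc, Fin.val_last]
    simp only [← Finset.mul_sum, hMrow, mul_one]

lemma single_path (U : Type*) [Fintype U] (J : ℕ)
    (γ : ℕ → U → ℝ) (hpos : ∀ j, j ≤ J → ∀ x, 0 < γ j x)
    (M : ℕ → U → U → ℝ)
    (hMinv : ∀ j, 1 ≤ j → j ≤ J → ∀ y, ∑ x, γ j x * M j x y = γ j y)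
    (φ : U → ℝ) :
    ∑ y : Fin (J + 1) → U,
      (γ 0 (y 0) * ∏ j : Fin J, M ((j : ℕ) + 1) (y j.castSucc) (y j.succ)) *
        ((∏ j : Fin J,
            γ ((j : ℕ) + 1) (y j.castSucc) / γ (j : ℕ) (y j.castSucc)) *
          φ (y (Fin.last J))) =
    ∑ x, φ x * γ J x := by
  induction J generalizing φ with
  | zero =>
    rw [← (Equiv.funUnique (Fin 1) U).symm.sum_comp]
    simp [mul_comm]
  | succ J ih =>
    rw [← (Fin.snocEquiv (fun _ => U)).sum_comp, Fintype.sum_prod_type, Finset.sum_comm]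
    have key : ∑ y : Fin (J + 1) → U,
        (γ 0 (y 0) * ∏ j : Fin J, M ((j : ℕ) + 1) (y j.castSucc) (y j.succ)) *
          ((∏ j : Fin J,
              γ ((j : ℕ) + 1) (y j.castSucc) / γ (j : ℕ) (y j.castSucc)) *
            ((γ (J + 1) (y (Fin.last J)) / γ J (y (Fin.last J))) *
              ∑ x, M (J + 1) (y (Fin.last J)) x * φ x)) =
        ∑ z, ((γ (J + 1) z / γ J z) * ∑ x, M (J + 1) z x * φ x) * γ J z :=
      ih (fun j hj => hpos j (hj.trans (Nat.le_succ J)))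
        (fun j h1 h2 z => hMinv j h1 (h2.trans (Nat.le_succ J)) z)
        (fun z => (γ (J + 1) z / γ J z) * ∑ x, M (J + 1) z x * φ x)
    have h0 : (0 : Fin (J + 2)) = Fin.castSucc 0 := rfl
    calc ∑ y : Fin (J + 1) → U, ∑ x : U,
          (γ 0 ((Fin.snocEquiv (fun _ => U)) (x, y) 0) *
            ∏ j : Fin (J + 1), M ((j : ℕ) + 1)
              ((Fin.snocEquiv (fun _ => U)) (x, y) j.castSucc)
              ((Fin.snocEquiv (fun _ => U)) (x, y) j.succ)) *
          ((∏ j : Fin (J + 1),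
              γ ((j : ℕ) + 1) ((Fin.snocEquiv (fun _ => U)) (x, y) j.castSucc) /
                γ (j : ℕ) ((Fin.snocEquiv (fun _ => U)) (x, y) j.castSucc)) *
            φ ((Fin.snocEquiv (fun _ => U)) (x, y) (Fin.last (J + 1))))
        = ∑ z, ((γ (J + 1) z / γ J z) * ∑ x, M (J + 1) z x * φ x) * γ J z := by
          rw [← key]
          refine Finset.sum_congr rfl fun y _ => ?_
          simp only [Fin.snocEquiv_apply, Fin.prod_univ_castSucc, h0, Fin.snoc_castSucc,
            Fin.succ_castSucc, Fin.succ_last, Fin.snoc_last, Fin.coe_castSucc, Fin.val_last]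
          simp only [Finset.mul_sum]
          exact Finset.sum_congr rfl fun x _ => by ring
      _ = ∑ z, γ (J + 1) z * ∑ x, M (J + 1) z x * φ x := by
          refine Finset.sum_congr rfl fun z _ => ?_
          field_simp [(hpos J (Nat.le_succ J) z).ne']
      _ = ∑ x, φ x * γ (J + 1) x := by
          simp only [Finset.mul_sum]
          rw [Finset.sum_comm]
          refine Finset.sum_congr rfl fun x _ => ?_
          have h := hMinv (J + 1) (Nat.le_add_left 1 J) le_rfl x
          calc ∑ z, γ (J + 1) z * (M (J + 1) z x * φ x)
              = (∑ z, γ (J + 1) z * M (J + 1) z x) * φ x := by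
                rw [Finset.sum_mul]; exact Finset.sum_congr rfl fun z _ => by ring
            _ = φ x * γ (J + 1) x := by rw [h]; ring

/-- Unbiasedness of the annealed importance sampling estimator (SMC sampler
without resampling): with `N` i.i.d. paths generated from `γ_0` via the
`η_j`-invariant kernels `M_j`, and weights `W^i = ∏_j G_{j-1}(x_{j-1}^i)`, the
estimator `(1/N)∑_i W^i φ(x_J^i)` has expectation `Γ_J(φ)`. -/
theorem ais_estimator_unbiased
    (U : Type*) [Fintype U] [Nonempty U] (J N : ℕ) (hN : 0 < N)
    (γ : ℕ → U → ℝ) (hpos : ∀ j, j ≤ J → ∀ x, 0 < γ j x)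
    (hinit : ∑ x, γ 0 x = 1)
    (M : ℕ → U → U → ℝ)
    (hMnn : ∀ j x y, 0 ≤ M j x y)
    (hMrow : ∀ j x, ∑ y, M j x y = 1)
    (hMinv : ∀ j, 1 ≤ j → j ≤ J → ∀ y, ∑ x, γ j x * M j x y = γ j y)
    (φ : U → ℝ) :
    ∑ Y : Fin N → Fin (J + 1) → U,
      ((∏ i, (γ 0 (Y i 0) *
          ∏ j : Fin J, M ((j : ℕ) + 1) (Y i j.castSucc) (Y i j.succ))) *
        ((1 / (N : ℝ)) * ∑ i,
          (∏ j : Fin J,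
            γ ((j : ℕ) + 1) (Y i j.castSucc) / γ (j : ℕ) (Y i j.castSucc)) *
            φ (Y i (Fin.last J)))) =
    ∑ x, φ x * γ J x := by
  classical
  set P : (Fin (J + 1) → U) → ℝ :=
    fun y => γ 0 (y 0) * ∏ j : Fin J, M ((j : ℕ) + 1) (y j.castSucc) (y j.succ) with hPdef
  set f : (Fin (J + 1) → U) → ℝ :=
    fun y => (∏ j : Fin J,
        γ ((j : ℕ) + 1) (y j.castSucc) / γ (j : ℕ) (y j.castSucc)) * φ (y (Fin.last J))
    with hfdef
  have hP : ∑ y, P y = 1 := by rw [hPdef]; rw [path_norm U J (γ 0) M hMrow]; exact hinit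
  have hE : ∑ y, P y * f y = ∑ x, φ x * γ J x := single_path U J γ hpos M hMinv φ
  have step : ∀ i : Fin N,
      (∑ Y : Fin N → Fin (J + 1) → U, (∏ i', P (Y i')) * f (Y i)) = ∑ x, φ x * γ J x := by
    intro i
    set g : Fin N → (Fin (J + 1) → U) → ℝ :=
      fun i' y => if i' = i then P y * f y else P y with hgdef
    have h1 : ∀ Y : Fin N → Fin (J + 1) → U,
        (∏ i', P (Y i')) * f (Y i) = ∏ i', g i' (Y i') := by
      intro Y
      rw [← Finset.mul_prod_erase univ (fun i' => g i' (Y i')) (mem_univ i),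
        ← Finset.mul_prod_erase univ (fun i' => P (Y i')) (mem_univ i)]
      have : ∏ i' ∈ univ.erase i, g i' (Y i') = ∏ i' ∈ univ.erase i, P (Y i') :=
        Finset.prod_congr rfl fun i' hi' => by
          simp [hgdef, (Finset.mem_erase.mp hi').1]
      rw [this]
      simp only [hgdef, if_pos rfl]
      ring
    calc (∑ Y : Fin N → Fin (J + 1) → U, (∏ i', P (Y i')) * f (Y i))
        = ∑ Y : Fin N → Fin (J + 1) → U, ∏ i', g i' (Y i') :=
          Finset.sum_congr rfl fun Y _ => h1 Y
      _ = ∏ i', ∑ y, g i' y := (Fintype.prod_sum _).symm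
      _ = ∏ i' : Fin N, if i' = i then ∑ x, φ x * γ J x else 1 := by
          refine Finset.prod_congr rfl fun i' _ => ?_
          by_cases h : i' = i <;> simp [hgdef, h, hP, hE]
      _ = ∑ x, φ x * γ J x := by rw [Finset.prod_ite_eq' univ i]; simp
  calc ∑ Y : Fin N → Fin (J + 1) → U, (∏ i', P (Y i')) * ((1 / (N : ℝ)) * ∑ i, f (Y i))
      = ∑ i : Fin N, (1 / (N : ℝ)) *
          ∑ Y : Fin N → Fin (J + 1) → U, (∏ i', P (Y i')) * f (Y i) := by
        simp only [Finset.mul_sum]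
        rw [Finset.sum_comm]
        refine Finset.sum_congr rfl fun i _ => ?_
        exact Finset.sum_congr rfl fun Y _ => by ring
    _ = ∑ i : Fin N, (1 / (N : ℝ)) * ∑ x, φ x * γ J x := by
        exact Finset.sum_congr rfl fun i _ => by rw [step i]
    _ = ∑ x, φ x * γ J x := by
        rw [Finset.sum_const, card_univ, Fintype.card_fin, nsmul_eq_mul]
        have : (N : ℝ) ≠ 0 := Nat.cast_ne_zero.mpr hN.ne'
        field_simp
end
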